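/- For the DFAs A' and B constructed from a monotone circuit g_1,…,g_n: if there exists an infinite tower between L(A') and L(B), then val(n) = 1. -/

import Mathlib

/-- The type of a gate in a monotone circuit with `n + 1` gates: a `0`-gate, a
`1`-gate, an `∧`-gate with children `l, r`, or an `∨`-gate with children `l, r`. -/
inductive Gate (n : ℕ) where
  | zero : Gate n
  | one : Gate n
  | and (l r : Fin (n + 1)) : Gate n
  | or (l r : Fin (n + 1)) : Gate n

/-- A monotone circuit with gates `g_0, …, g_n`, where the children of each
`∧`- or `∨`-gate have strictly smaller indices. -/
structure Circuit (n : ℕ) where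
  gate : Fin (n + 1) → Gate n
  and_lt : ∀ i l r, gate i = Gate.and l r → l < i ∧ r < i
  or_lt : ∀ i l r, gate i = Gate.or l r → l < i ∧ r < i

set_option linter.unusedVariables false in
/-- The value of gate `i`: `0`-gates are false, `1`-gates are true, `∧`-gates and
`∨`-gates take the conjunction resp. disjunction of their children's values. -/
def Circuit.val {n : ℕ} (c : Circuit n) (i : Fin (n + 1)) : Bool :=
  match h : c.gate i with
  | Gate.zero => false
  | Gate.one => true
  | Gate.and l r =>
      have hlt := c.and_lt i l r h;
      c.val l && c.val r
  | Gate.or l r =>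
      have hlt := c.or_lt i l r h
      c.val l || c.val r
termination_by (i : ℕ)
decreasing_by
  · exact hlt.1
  · exact hlt.2
  · exact hlt.1
  · exact hlt.2

/-- The alphabet `Σ = {x, y} ∪ {aᵢ, bᵢ : 0 ≤ i ≤ n}`. -/
inductive Alpha (n : ℕ) where
  | x : Alpha n
  | y : Alpha n
  | a (i : Fin (n + 1)) : Alpha n
  | b (i : Fin (n + 1)) : Alpha n
deriving DecidableEq

/-- The states of the DFA `A'`: the initial state `s`, the accepting states
`⊥` (bot) and `⊤` (top), a state for each gate, and a non-accepting sink. -/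
inductive StA (n : ℕ) where
  | s : StA n
  | bot : StA n
  | top : StA n
  | g (i : Fin (n + 1)) : StA n
  | sink : StA n
deriving DecidableEq

/-- The DFA `A'` constructed from the monotone circuit `c`. -/
def dfaA {n : ℕ} (c : Circuit n) : DFA (Alpha n) (StA n) where
  step := fun p ch =>
    match p, ch with
    | StA.s, Alpha.x => StA.g (Fin.last n)
    | StA.top, Alpha.y => StA.s
    | StA.g i, Alpha.a j =>
        if j = i then
          match c.gate i with
          | Gate.zero => StA.bot
          | Gate.one => StA.top
          | Gate.and l _ => StA.g l
          | Gate.or l _ => StA.g l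
        else StA.sink
    | StA.g i, Alpha.b j =>
        if j = i then
          match c.gate i with
          | Gate.zero => StA.bot
          | Gate.one => StA.top
          | Gate.and _ r => StA.g r
          | Gate.or _ r => StA.g r
        else StA.sink
    | _, _ => StA.sink
  start := StA.s
  accept := {StA.bot, StA.top}

/-- The states of the DFA `B`: the initial and accepting state `q`, a state `t`,
a state for each gate (only the `∧`-gate states are used), and a sink. -/
inductive StB (n : ℕ) where
  | q : StB n
  | t : StB n
  | g (i : Fin (n + 1)) : StB n
  | sink : StB n
deriving DecidableEq

/-- The DFA `B` constructed from the monotone circuit `c`. -/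
def dfaB {n : ℕ} (c : Circuit n) : DFA (Alpha n) (StB n) where
  step := fun p ch =>
    match p, ch with
    | StB.q, Alpha.x => StB.t
    | StB.t, Alpha.y => StB.q
    | StB.t, Alpha.a i =>
        match c.gate i with
        | Gate.and _ _ => StB.g i
        | Gate.or _ _ => StB.t
        | Gate.one => StB.t
        | Gate.zero => StB.sink
    | StB.t, Alpha.b i =>
        match c.gate i with
        | Gate.or _ _ => StB.t
        | Gate.one => StB.t
        | _ => StB.sink
    | StB.g i, Alpha.b j =>
        if j = i then
          match c.gate i with
          | Gate.and _ _ => StB.t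
          | _ => StB.sink
        else StB.sink
    | _, _ => StB.sink
  start := StB.q
  accept := {StB.q}

/-- `w` is an infinite tower between the languages `K` and `L`:
`w 0 ∈ K ∪ L`, each word is a subsequence of the next, a word in `K` is followed by a
word in `L`, and a word in `L` is followed by a word in `K`. -/
def IsInfiniteTower {α : Type*} (K L : Set (List α)) (w : ℕ → List α) : Prop :=
  w 0 ∈ K ∪ L ∧ (∀ i, (w i).Sublist (w (i + 1))) ∧
    (∀ i, w i ∈ K → w (i + 1) ∈ L) ∧ (∀ i, w i ∈ L → w (i + 1) ∈ K)

/-- There exists an infinite tower between `K` and `L`. -/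
def HasInfiniteTower {α : Type*} (K L : Set (List α)) : Prop :=
  ∃ w : ℕ → List α, IsInfiniteTower K L w

namespace TowerAux
variable {n : ℕ} (c : Circuit n)

lemma val_zero {i} (h : c.gate i = Gate.zero) : c.val i = false := by
  conv_lhs => unfold Circuit.val
  split <;> simp_all

lemma val_one {i} (h : c.gate i = Gate.one) : c.val i = true := by
  conv_lhs => unfold Circuit.val
  split <;> simp_all

lemma val_and {i l r} (h : c.gate i = Gate.and l r) : c.val i = (c.val l && c.val r) := by
  conv_lhs => unfold Circuit.val
  split
  · simp_all
  · simp_all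
  · rename_i l' r' heq
    rw [h] at heq; injection heq with e1 e2; subst e1; subst e2; rfl
  · rename_i l' r' heq
    rw [h] at heq; exact absurd heq (by simp)

lemma val_or {i l r} (h : c.gate i = Gate.or l r) : c.val i = (c.val l || c.val r) := by
  conv_lhs => unfold Circuit.val
  split
  · simp_all
  · simp_all
  · rename_i l' r' heq
    rw [h] at heq; exact absurd heq (by simp)
  · rename_i l' r' heq
    rw [h] at heq; injection heq with e1 e2; subst e1; subst e2; rfl

lemma sinkA (β : List (Alpha n)) : (dfaA c).evalFrom StA.sink β = StA.sink := by
  induction β with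
  | nil => rfl
  | cons ch rest ih => exact ih

lemma sinkB (β : List (Alpha n)) : (dfaB c).evalFrom StB.sink β = StB.sink := by
  induction β with
  | nil => rfl
  | cons ch rest ih => exact ih

lemma sinkA_not_accept : StA.sink ∉ (dfaA c).accept := by
  simp [dfaA]

lemma sinkB_not_accept : StB.sink ∉ (dfaB c).accept := by
  simp [dfaB]

end TowerAux
namespace TowerAux
variable {n : ℕ} (c : Circuit n)

lemma lemW : ∀ N : ℕ, ∀ i : Fin (n+1), i.val < N → c.val i = false →
    ∀ β : List (Alpha n), (dfaA c).evalFrom (StA.g i) β ∈ (dfaA c).accept →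
    (∃ (j l r : Fin (n+1)), j ≤ i ∧ c.gate j = Gate.and l r ∧ c.val j = false ∧
      (Alpha.a j ∈ β ∨ Alpha.b j ∈ β)) ∨
    (∃ m, c.gate m = Gate.zero ∧ (Alpha.a m ∈ β ∨ Alpha.b m ∈ β)) := by
  intro N
  induction N with
  | zero => intro i hi; omega
  | succ N ih =>
    intro i hi hval β hacc
    match β with
    | [] => simp [DFA.evalFrom, dfaA] at hacc
    | ch :: rest =>
      have hstep : (dfaA c).evalFrom (StA.g i) (ch :: rest)
          = (dfaA c).evalFrom ((dfaA c).step (StA.g i) ch) rest := rfl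
      rw [hstep] at hacc
      match ch with
      | Alpha.x =>
        rw [show (dfaA c).step (StA.g i) Alpha.x = StA.sink from rfl, sinkA] at hacc
        exact absurd hacc (sinkA_not_accept c)
      | Alpha.y =>
        rw [show (dfaA c).step (StA.g i) Alpha.y = StA.sink from rfl, sinkA] at hacc
        exact absurd hacc (sinkA_not_accept c)
      | Alpha.a m =>
        by_cases hm : m = i
        · subst hm
          match hg : c.gate m with
          | Gate.zero =>
            exact Or.inr ⟨m, hg, Or.inl (List.mem_cons_self)⟩
          | Gate.one =>
            rw [val_one c hg] at hval; exact absurd hval (by simp)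
          | Gate.and l r =>
            exact Or.inl ⟨m, l, r, le_refl _, hg, hval, Or.inl (List.mem_cons_self)⟩
          | Gate.or l r =>
            have hstep3 : (dfaA c).step (StA.g m) (Alpha.a m) = StA.g l := by
              show (if m = m then _ else _) = _
              rw [if_pos rfl, hg]
            rw [hstep3] at hacc
            have hlr := c.or_lt m l r hg
            have hvl : c.val l = false := by
              rw [val_or c hg] at hval
              exact (Bool.or_eq_false_iff.mp hval).1
            have hlm : (l : ℕ) < (m : ℕ) := hlr.1
            rcases ih l (by omega) hvl rest hacc with
              ⟨j, l', r', hle, hgj, hvj, hmem⟩ | ⟨m0, hg0, hmem⟩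
            · exact Or.inl ⟨j, l', r', le_trans hle (le_of_lt hlr.1), hgj, hvj,
                hmem.imp (List.mem_cons_of_mem _) (List.mem_cons_of_mem _)⟩
            · exact Or.inr ⟨m0, hg0,
                hmem.imp (List.mem_cons_of_mem _) (List.mem_cons_of_mem _)⟩
        · have hstep3 : (dfaA c).step (StA.g i) (Alpha.a m) = StA.sink := by
            show (if m = i then _ else _) = _
            rw [if_neg hm]
          rw [hstep3, sinkA] at hacc
          exact absurd hacc (sinkA_not_accept c)
      | Alpha.b m =>
        by_cases hm : m = i
        · subst hm
          match hg : c.gate m with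
          | Gate.zero =>
            exact Or.inr ⟨m, hg, Or.inr (List.mem_cons_self)⟩
          | Gate.one =>
            rw [val_one c hg] at hval; exact absurd hval (by simp)
          | Gate.and l r =>
            exact Or.inl ⟨m, l, r, le_refl _, hg, hval, Or.inr (List.mem_cons_self)⟩
          | Gate.or l r =>
            have hstep3 : (dfaA c).step (StA.g m) (Alpha.b m) = StA.g r := by
              show (if m = m then _ else _) = _
              rw [if_pos rfl, hg]
            rw [hstep3] at hacc
            have hlr := c.or_lt m l r hg
            have hvr : c.val r = false := by
              rw [val_or c hg] at hval
              exact (Bool.or_eq_false_iff.mp hval).2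
            have hrm : (r : ℕ) < (m : ℕ) := hlr.2
            rcases ih r (by omega) hvr rest hacc with
              ⟨j, l', r', hle, hgj, hvj, hmem⟩ | ⟨m0, hg0, hmem⟩
            · exact Or.inl ⟨j, l', r', le_trans hle (le_of_lt hlr.2), hgj, hvj,
                hmem.imp (List.mem_cons_of_mem _) (List.mem_cons_of_mem _)⟩
            · exact Or.inr ⟨m0, hg0,
                hmem.imp (List.mem_cons_of_mem _) (List.mem_cons_of_mem _)⟩
        · have hstep3 : (dfaA c).step (StA.g i) (Alpha.b m) = StA.sink := by
            show (if m = i then _ else _) = _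
            rw [if_neg hm]
          rw [hstep3, sinkA] at hacc
          exact absurd hacc (sinkA_not_accept c)

end TowerAux
namespace TowerAux
variable {n : ℕ} (c : Circuit n)

lemma B0 {v : List (Alpha n)} (hv : v ∈ (dfaB c).accepts) {m : Fin (n+1)}
    (hg : c.gate m = Gate.zero) : Alpha.a m ∉ v ∧ Alpha.b m ∉ v := by
  have keya : ∀ st : StB n, (dfaB c).step st (Alpha.a m) = StB.sink := by
    intro st
    match st with
    | StB.q => rfl
    | StB.t =>
      show (match c.gate m with
        | Gate.and _ _ => StB.g m | Gate.or _ _ => StB.t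
        | Gate.one => StB.t | Gate.zero => StB.sink) = _
      rw [hg]
    | StB.g i => rfl
    | StB.sink => rfl
  have keyb : ∀ st : StB n, (dfaB c).step st (Alpha.b m) = StB.sink := by
    intro st
    match st with
    | StB.q => rfl
    | StB.t =>
      show (match c.gate m with
        | Gate.or _ _ => StB.t | Gate.one => StB.t | _ => StB.sink) = _
      rw [hg]
    | StB.g i =>
      by_cases h : m = i
      · subst h
        show (if m = m then _ else _) = _
        rw [if_pos rfl, hg]
      · show (if m = i then _ else _) = _
        rw [if_neg h]
    | StB.sink => rfl
  constructor
  · intro hmem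
    obtain ⟨α, β, rfl⟩ := List.append_of_mem hmem
    rw [(dfaB c).mem_accepts] at hv
    have hv2 : (dfaB c).evalFrom ((dfaB c).evalFrom (dfaB c).start α) (Alpha.a m :: β)
        ∈ (dfaB c).accept := by rw [← DFA.evalFrom_of_append]; exact hv
    rw [show (dfaB c).evalFrom ((dfaB c).evalFrom (dfaB c).start α) (Alpha.a m :: β)
        = (dfaB c).evalFrom ((dfaB c).step ((dfaB c).evalFrom (dfaB c).start α) (Alpha.a m)) β
      from rfl, keya, sinkB] at hv2
    exact absurd hv2 (sinkB_not_accept c)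
  · intro hmem
    obtain ⟨α, β, rfl⟩ := List.append_of_mem hmem
    rw [(dfaB c).mem_accepts] at hv
    have hv2 : (dfaB c).evalFrom ((dfaB c).evalFrom (dfaB c).start α) (Alpha.b m :: β)
        ∈ (dfaB c).accept := by rw [← DFA.evalFrom_of_append]; exact hv
    rw [show (dfaB c).evalFrom ((dfaB c).evalFrom (dfaB c).start α) (Alpha.b m :: β)
        = (dfaB c).evalFrom ((dfaB c).step ((dfaB c).evalFrom (dfaB c).start α) (Alpha.b m)) β
      from rfl, keyb, sinkB] at hv2
    exact absurd hv2 (sinkB_not_accept c)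

lemma stepB_into_gj {j : Fin (n+1)} (st : StB n) (ch : Alpha n)
    (h : (dfaB c).step st ch = StB.g j) : ch = Alpha.a j := by
  match st, ch with
  | StB.q, Alpha.x => exact absurd h (by simp [dfaB])
  | StB.q, Alpha.y => exact absurd h (by simp [dfaB])
  | StB.q, Alpha.a i => exact absurd h (by simp [dfaB])
  | StB.q, Alpha.b i => exact absurd h (by simp [dfaB])
  | StB.t, Alpha.x => exact absurd h (by simp [dfaB])
  | StB.t, Alpha.y => exact absurd h (by simp [dfaB])
  | StB.t, Alpha.a i =>
    match hg : c.gate i with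
    | Gate.zero =>
      rw [show (dfaB c).step StB.t (Alpha.a i) = (match c.gate i with
        | Gate.and _ _ => StB.g i | Gate.or _ _ => StB.t
        | Gate.one => StB.t | Gate.zero => StB.sink) from rfl, hg] at h
      exact absurd h (by simp)
    | Gate.one =>
      rw [show (dfaB c).step StB.t (Alpha.a i) = (match c.gate i with
        | Gate.and _ _ => StB.g i | Gate.or _ _ => StB.t
        | Gate.one => StB.t | Gate.zero => StB.sink) from rfl, hg] at h
      exact absurd h (by simp)
    | Gate.and l r =>
      rw [show (dfaB c).step StB.t (Alpha.a i) = (match c.gate i with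
        | Gate.and _ _ => StB.g i | Gate.or _ _ => StB.t
        | Gate.one => StB.t | Gate.zero => StB.sink) from rfl, hg] at h
      injection h with h'
      rw [h']
    | Gate.or l r =>
      rw [show (dfaB c).step StB.t (Alpha.a i) = (match c.gate i with
        | Gate.and _ _ => StB.g i | Gate.or _ _ => StB.t
        | Gate.one => StB.t | Gate.zero => StB.sink) from rfl, hg] at h
      exact absurd h (by simp)
  | StB.t, Alpha.b i =>
    match hg : c.gate i with
    | Gate.zero =>
      rw [show (dfaB c).step StB.t (Alpha.b i) = (match c.gate i with
        | Gate.or _ _ => StB.t | Gate.one => StB.t | _ => StB.sink) from rfl, hg] at h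
      exact absurd h (by simp)
    | Gate.one =>
      rw [show (dfaB c).step StB.t (Alpha.b i) = (match c.gate i with
        | Gate.or _ _ => StB.t | Gate.one => StB.t | _ => StB.sink) from rfl, hg] at h
      exact absurd h (by simp)
    | Gate.and l r =>
      rw [show (dfaB c).step StB.t (Alpha.b i) = (match c.gate i with
        | Gate.or _ _ => StB.t | Gate.one => StB.t | _ => StB.sink) from rfl, hg] at h
      exact absurd h (by simp)
    | Gate.or l r =>
      rw [show (dfaB c).step StB.t (Alpha.b i) = (match c.gate i with
        | Gate.or _ _ => StB.t | Gate.one => StB.t | _ => StB.sink) from rfl, hg] at h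
      exact absurd h (by simp)
  | StB.g i, Alpha.x => exact absurd h (by simp [dfaB])
  | StB.g i, Alpha.y => exact absurd h (by simp [dfaB])
  | StB.g i, Alpha.a i' => exact absurd h (by simp [dfaB])
  | StB.g i, Alpha.b i' =>
    by_cases hii : i' = i
    · subst hii
      rw [show (dfaB c).step (StB.g i') (Alpha.b i')
          = (if i' = i' then (match c.gate i' with
              | Gate.and _ _ => StB.t | _ => StB.sink) else StB.sink) from rfl,
        if_pos rfl] at h
      match hg : c.gate i' with
      | Gate.zero => rw [hg] at h; exact absurd h (by simp)
      | Gate.one => rw [hg] at h; exact absurd h (by simp)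
      | Gate.and l r => rw [hg] at h; exact absurd h (by simp)
      | Gate.or l r => rw [hg] at h; exact absurd h (by simp)
    · rw [show (dfaB c).step (StB.g i) (Alpha.b i')
          = (if i' = i then (match c.gate i with
              | Gate.and _ _ => StB.t | _ => StB.sink) else StB.sink) from rfl,
        if_neg hii] at h
      exact absurd h (by simp)
  | StB.sink, ch => exact absurd h (by simp [dfaB, sinkB])

end TowerAux
namespace TowerAux
variable {n : ℕ} (c : Circuit n)

lemma Bpair_b_of_a {v : List (Alpha n)} (hv : v ∈ (dfaB c).accepts) {j l r : Fin (n+1)}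
    (hg : c.gate j = Gate.and l r) (ha : Alpha.a j ∈ v) : Alpha.b j ∈ v := by
  by_contra hb
  obtain ⟨α, β, rfl⟩ := List.append_of_mem ha
  have hbβ : Alpha.b j ∉ β := fun h => hb (List.mem_append.mpr (Or.inr (List.mem_cons_of_mem _ h)))
  rw [(dfaB c).mem_accepts] at hv
  have hv2 : (dfaB c).evalFrom ((dfaB c).step ((dfaB c).evalFrom (dfaB c).start α) (Alpha.a j)) β
      ∈ (dfaB c).accept := by
    have e : (dfaB c).eval (α ++ Alpha.a j :: β)
        = (dfaB c).evalFrom ((dfaB c).step ((dfaB c).evalFrom (dfaB c).start α) (Alpha.a j)) β :=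
      DFA.evalFrom_of_append _ _ _ _
    rw [e] at hv; exact hv
  -- analyze the state reached
  set st := (dfaB c).evalFrom (dfaB c).start α with hst
  have hcases : (dfaB c).step st (Alpha.a j) = StB.g j ∨ (dfaB c).step st (Alpha.a j) = StB.sink := by
    match st with
    | StB.q => exact Or.inr rfl
    | StB.t =>
      left
      show (match c.gate j with
        | Gate.and _ _ => StB.g j | Gate.or _ _ => StB.t
        | Gate.one => StB.t | Gate.zero => StB.sink) = _
      rw [hg]
    | StB.g i => exact Or.inr rfl
    | StB.sink => exact Or.inr rfl
  rcases hcases with hc | hc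
  · rw [hc] at hv2
    -- from g j, β with no b_j is rejected
    match β with
    | [] => simp [dfaB, DFA.evalFrom] at hv2
    | ch :: rest =>
      have hstep : (dfaB c).step (StB.g j) ch = StB.sink := by
        match ch with
        | Alpha.x => rfl
        | Alpha.y => rfl
        | Alpha.a i => rfl
        | Alpha.b i =>
          have hij : i ≠ j := fun h => hbβ (h ▸ List.mem_cons_self)
          show (if i = j then _ else _) = _
          rw [if_neg hij]
      rw [show (dfaB c).evalFrom (StB.g j) (ch :: rest)
          = (dfaB c).evalFrom ((dfaB c).step (StB.g j) ch) rest from rfl, hstep, sinkB] at hv2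
      exact absurd hv2 (sinkB_not_accept c)
  · rw [hc, sinkB] at hv2
    exact absurd hv2 (sinkB_not_accept c)

lemma Bpair_helper {j l r : Fin (n+1)} (hg : c.gate j = Gate.and l r) :
    ∀ β : List (Alpha n), Alpha.b j ∈ β → Alpha.a j ∉ β →
    ∀ st : StB n, st ≠ StB.g j → (dfaB c).evalFrom st β ∉ (dfaB c).accept := by
  intro β
  induction β with
  | nil => intro h; exact absurd h List.not_mem_nil
  | cons ch rest ih =>
    intro hb ha st hst
    by_cases hch : ch = Alpha.b j
    · subst hch
      have hstep : (dfaB c).step st (Alpha.b j) = StB.sink := by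
        match st with
        | StB.q => rfl
        | StB.t =>
          show (match c.gate j with
            | Gate.or _ _ => StB.t | Gate.one => StB.t | _ => StB.sink) = _
          rw [hg]
        | StB.g i =>
          have hji : j ≠ i := fun h => hst (by rw [h])
          show (if j = i then _ else _) = _
          rw [if_neg hji]
        | StB.sink => rfl
      rw [show (dfaB c).evalFrom st (Alpha.b j :: rest)
          = (dfaB c).evalFrom ((dfaB c).step st (Alpha.b j)) rest from rfl, hstep, sinkB]
      exact sinkB_not_accept c
    · have hb' : Alpha.b j ∈ rest := by
        rcases List.mem_cons.mp hb with h | h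
        · exact absurd h.symm hch
        · exact h
      have ha' : Alpha.a j ∉ rest := fun h => ha (List.mem_cons_of_mem _ h)
      have hst' : (dfaB c).step st ch ≠ StB.g j := by
        intro h
        have := stepB_into_gj c st ch h
        exact ha (this ▸ List.mem_cons_self)
      exact ih hb' ha' _ hst'

lemma Bpair_a_of_b {v : List (Alpha n)} (hv : v ∈ (dfaB c).accepts) {j l r : Fin (n+1)}
    (hg : c.gate j = Gate.and l r) (hb : Alpha.b j ∈ v) : Alpha.a j ∈ v := by
  by_contra ha
  have hq : (dfaB c).start ≠ StB.g j := by simp [dfaB]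
  exact Bpair_helper c hg v hb ha _ hq ((dfaB c).mem_accepts.mp hv)

lemma A2a {u : List (Alpha n)} (hu : u ∈ (dfaA c).accepts) {j l r : Fin (n+1)}
    (hg : c.gate j = Gate.and l r) (hm : Alpha.a j ∈ u) :
    ∃ α β, u = α ++ Alpha.a j :: β ∧ (dfaA c).evalFrom (StA.g l) β ∈ (dfaA c).accept := by
  obtain ⟨α, β, rfl⟩ := List.append_of_mem hm
  rw [(dfaA c).mem_accepts] at hu
  have hv2 : (dfaA c).evalFrom ((dfaA c).step ((dfaA c).evalFrom (dfaA c).start α) (Alpha.a j)) β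
      ∈ (dfaA c).accept := by
    have e : (dfaA c).eval (α ++ Alpha.a j :: β)
        = (dfaA c).evalFrom ((dfaA c).step ((dfaA c).evalFrom (dfaA c).start α) (Alpha.a j)) β :=
      DFA.evalFrom_of_append _ _ _ _
    rw [e] at hu; exact hu
  set st := (dfaA c).evalFrom (dfaA c).start α with hst
  have hcases : (dfaA c).step st (Alpha.a j) = StA.g l ∨ (dfaA c).step st (Alpha.a j) = StA.sink := by
    match st with
    | StA.s => exact Or.inr rfl
    | StA.bot => exact Or.inr rfl
    | StA.top => exact Or.inr rfl
    | StA.sink => exact Or.inr rfl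
    | StA.g i =>
      by_cases h : j = i
      · subst h
        left
        show (if j = j then _ else _) = _
        rw [if_pos rfl, hg]
      · right
        show (if j = i then _ else _) = _
        rw [if_neg h]
  rcases hcases with hc | hc
  · rw [hc] at hv2
    exact ⟨α, β, rfl, hv2⟩
  · rw [hc, sinkA] at hv2
    exact absurd hv2 (sinkA_not_accept c)

lemma A2b {u : List (Alpha n)} (hu : u ∈ (dfaA c).accepts) {j l r : Fin (n+1)}
    (hg : c.gate j = Gate.and l r) (hm : Alpha.b j ∈ u) :
    ∃ α β, u = α ++ Alpha.b j :: β ∧ (dfaA c).evalFrom (StA.g r) β ∈ (dfaA c).accept := by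
  obtain ⟨α, β, rfl⟩ := List.append_of_mem hm
  rw [(dfaA c).mem_accepts] at hu
  have hv2 : (dfaA c).evalFrom ((dfaA c).step ((dfaA c).evalFrom (dfaA c).start α) (Alpha.b j)) β
      ∈ (dfaA c).accept := by
    have e : (dfaA c).eval (α ++ Alpha.b j :: β)
        = (dfaA c).evalFrom ((dfaA c).step ((dfaA c).evalFrom (dfaA c).start α) (Alpha.b j)) β :=
      DFA.evalFrom_of_append _ _ _ _
    rw [e] at hu; exact hu
  set st := (dfaA c).evalFrom (dfaA c).start α with hst
  have hcases : (dfaA c).step st (Alpha.b j) = StA.g r ∨ (dfaA c).step st (Alpha.b j) = StA.sink := by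
    match st with
    | StA.s => exact Or.inr rfl
    | StA.bot => exact Or.inr rfl
    | StA.top => exact Or.inr rfl
    | StA.sink => exact Or.inr rfl
    | StA.g i =>
      by_cases h : j = i
      · subst h
        left
        show (if j = j then _ else _) = _
        rw [if_pos rfl, hg]
      · right
        show (if j = i then _ else _) = _
        rw [if_neg h]
  rcases hcases with hc | hc
  · rw [hc] at hv2
    exact ⟨α, β, rfl, hv2⟩
  · rw [hc, sinkA] at hv2
    exact absurd hv2 (sinkA_not_accept c)

end TowerAux
namespace TowerAux
variable {n : ℕ} (c : Circuit n)

lemma descent (w : ℕ → List (Alpha n))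
    (hsub : ∀ i, (w i).Sublist (w (i+1)))
    (hKL : ∀ i, w i ∈ (dfaA c).accepts → w (i+1) ∈ (dfaB c).accepts)
    (hLK : ∀ i, w i ∈ (dfaB c).accepts → w (i+1) ∈ (dfaA c).accepts) :
    ∀ N : ℕ, ∀ (j l r : Fin (n+1)), j.val < N → ∀ t, w t ∈ (dfaA c).accepts →
      c.gate j = Gate.and l r → c.val j = false →
      (Alpha.a j ∈ w t ∨ Alpha.b j ∈ w t) → False := by
  intro N
  induction N with
  | zero => intro j l r hj; omega
  | succ N ih =>
    intro j l r hj t hK hg hv hmem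
    have hL1 : w (t+1) ∈ (dfaB c).accepts := hKL t hK
    have hK2 : w (t+2) ∈ (dfaA c).accepts := hLK (t+1) hL1
    have ha1 : Alpha.a j ∈ w (t+1) := by
      rcases hmem with h | h
      · exact (hsub t).subset h
      · exact Bpair_a_of_b c hL1 hg ((hsub t).subset h)
    have hb1 : Alpha.b j ∈ w (t+1) := Bpair_b_of_a c hL1 hg ha1
    have ha2 : Alpha.a j ∈ w (t+2) := (hsub (t+1)).subset ha1
    have hb2 : Alpha.b j ∈ w (t+2) := (hsub (t+1)).subset hb1
    have hvand : (c.val l && c.val r) = false := by rw [← val_and c hg]; exact hv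
    have hL3 : w (t+3) ∈ (dfaB c).accepts := hKL (t+2) hK2
    cases hcl : c.val l with
    | false =>
      obtain ⟨α, β, heq, hacc⟩ := A2a c hK2 hg ha2
      rcases lemW c (l.val + 1) l (Nat.lt_succ_self _) hcl β hacc with
        ⟨j', l', r', hle, hgj', hvj', hmem'⟩ | ⟨m, hgm, hmemm⟩
      · have hlj : (l : ℕ) < (j : ℕ) := (c.and_lt j l r hg).1
        have hj'l : (j' : ℕ) ≤ (l : ℕ) := hle
        have mem2 : Alpha.a j' ∈ w (t+2) ∨ Alpha.b j' ∈ w (t+2) := by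
          refine hmem'.imp (fun h => ?_) (fun h => ?_) <;>
            · rw [heq]; exact List.mem_append.mpr (Or.inr (List.mem_cons_of_mem _ h))
        exact ih j' l' r' (by omega) (t+2) hK2 hgj' hvj' mem2
      · have hB := B0 c hL3 hgm
        rcases hmemm with h | h
        · exact hB.1 ((hsub (t+2)).subset
            (by rw [heq]; exact List.mem_append.mpr (Or.inr (List.mem_cons_of_mem _ h))))
        · exact hB.2 ((hsub (t+2)).subset
            (by rw [heq]; exact List.mem_append.mpr (Or.inr (List.mem_cons_of_mem _ h))))
    | true =>
      have hcr : c.val r = false := by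
        rw [hcl] at hvand; simpa using hvand
      obtain ⟨α, β, heq, hacc⟩ := A2b c hK2 hg hb2
      rcases lemW c (r.val + 1) r (Nat.lt_succ_self _) hcr β hacc with
        ⟨j', l', r', hle, hgj', hvj', hmem'⟩ | ⟨m, hgm, hmemm⟩
      · have hrj : (r : ℕ) < (j : ℕ) := (c.and_lt j l r hg).2
        have hj'r : (j' : ℕ) ≤ (r : ℕ) := hle
        have mem2 : Alpha.a j' ∈ w (t+2) ∨ Alpha.b j' ∈ w (t+2) := by
          refine hmem'.imp (fun h => ?_) (fun h => ?_) <;>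
            · rw [heq]; exact List.mem_append.mpr (Or.inr (List.mem_cons_of_mem _ h))
        exact ih j' l' r' (by omega) (t+2) hK2 hgj' hvj' mem2
      · have hB := B0 c hL3 hgm
        rcases hmemm with h | h
        · exact hB.1 ((hsub (t+2)).subset
            (by rw [heq]; exact List.mem_append.mpr (Or.inr (List.mem_cons_of_mem _ h))))
        · exact hB.2 ((hsub (t+2)).subset
            (by rw [heq]; exact List.mem_append.mpr (Or.inr (List.mem_cons_of_mem _ h))))

lemma main_aux (hval : c.val (Fin.last n) = false)
    (w : ℕ → List (Alpha n))
    (hsub : ∀ i, (w i).Sublist (w (i+1)))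
    (hKL : ∀ i, w i ∈ (dfaA c).accepts → w (i+1) ∈ (dfaB c).accepts)
    (hLK : ∀ i, w i ∈ (dfaB c).accepts → w (i+1) ∈ (dfaA c).accepts)
    (t0 : ℕ) (hK0 : w t0 ∈ (dfaA c).accepts) : False := by
  have hacc : (dfaA c).evalFrom (dfaA c).start (w t0) ∈ (dfaA c).accept :=
    (dfaA c).mem_accepts.mp hK0
  match hW : w t0 with
  | [] =>
    rw [hW] at hacc
    simp [dfaA, DFA.evalFrom] at hacc
  | ch :: rest =>
    rw [hW] at hacc
    have hstep : (dfaA c).evalFrom (dfaA c).start (ch :: rest)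
        = (dfaA c).evalFrom ((dfaA c).step (dfaA c).start ch) rest := rfl
    rw [hstep] at hacc
    match ch with
    | Alpha.y => rw [show (dfaA c).step (dfaA c).start Alpha.y = StA.sink from rfl, sinkA] at hacc
                 exact absurd hacc (sinkA_not_accept c)
    | Alpha.a i => rw [show (dfaA c).step (dfaA c).start (Alpha.a i) = StA.sink from rfl, sinkA] at hacc
                   exact absurd hacc (sinkA_not_accept c)
    | Alpha.b i => rw [show (dfaA c).step (dfaA c).start (Alpha.b i) = StA.sink from rfl, sinkA] at hacc
                   exact absurd hacc (sinkA_not_accept c)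
    | Alpha.x =>
      rw [show (dfaA c).step (dfaA c).start Alpha.x = StA.g (Fin.last n) from rfl] at hacc
      rcases lemW c (n+1) (Fin.last n) (by simp) hval rest hacc with
        ⟨j, l', r', hle, hgj, hvj, hmem⟩ | ⟨m, hgm, hmemm⟩
      · have mem0 : Alpha.a j ∈ w t0 ∨ Alpha.b j ∈ w t0 := by
          refine hmem.imp (fun h => ?_) (fun h => ?_) <;>
            · rw [hW]; exact List.mem_cons_of_mem _ h
        exact descent c w hsub hKL hLK (n+1) j l' r' j.isLt t0 hK0 hgj hvj mem0
      · have hL1 : w (t0+1) ∈ (dfaB c).accepts := hKL t0 hK0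
        have hB := B0 c hL1 hgm
        rcases hmemm with h | h
        · exact hB.1 ((hsub t0).subset (by rw [hW]; exact List.mem_cons_of_mem _ h))
        · exact hB.2 ((hsub t0).subset (by rw [hW]; exact List.mem_cons_of_mem _ h))

end TowerAux
/-- If there is an infinite tower between `L(A')` and `L(B)`, then the output gate
of the monotone circuit evaluates to `1`. -/
theorem stmt12 {n : ℕ} (c : Circuit n)
    (h : HasInfiniteTower {w : List (Alpha n) | w ∈ (dfaA c).accepts}
      {w : List (Alpha n) | w ∈ (dfaB c).accepts}) :
    c.val (Fin.last n) = true := by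
  by_contra hne
  have hval : c.val (Fin.last n) = false := by
    revert hne; cases c.val (Fin.last n) <;> simp
  obtain ⟨w, hw0, hsub, hKL, hLK⟩ := h
  have hKL' : ∀ i, w i ∈ (dfaA c).accepts → w (i+1) ∈ (dfaB c).accepts := hKL
  have hLK' : ∀ i, w i ∈ (dfaB c).accepts → w (i+1) ∈ (dfaA c).accepts := hLK
  rcases hw0 with hk | hl
  · exact TowerAux.main_aux c hval w hsub hKL' hLK' 0 hk
  · exact TowerAux.main_aux c hval w hsub hKL' hLK' 1 (hLK' 0 hl)
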